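/- For |q|<1, the evaluation at ζ=−1 of the restricted overpartition generating function equals an eta-quotient: ∑_{n≥0} (−q^{2n+2},q^{2n+3};q²)_∞·(−q^{2n+1})/(−q^{2n+2};q²)_∞ + ∑_{n≥1} (−q^{2n},q^{2n+1};q²)_∞·(−q^{2n})/(−q^{2n};q²)_∞ = (1+q)·((q;q²)_∞ − 1). -/

import Mathlib

open scoped BigOperators

/-- The infinite q-Pochhammer symbol `(a;q)_∞ = ∏_{j=0}^{∞} (1 - a q^j)`. -/
noncomputable def qPochInf (a q : ℂ) : ℂ := ∏' j : ℕ, (1 - a * q ^ j)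

open Filter Complex

lemma aux_one_sub_ne {z : ℂ} (h : ‖z‖ < 1) : 1 - z ≠ 0 := by
  intro h0
  rw [sub_eq_zero] at h0
  rw [← h0] at h
  simp at h

/-- Summability of logs of `1 - g j`. -/
lemma aux_log_summable {g : ℕ → ℂ} (hg : Summable fun j => ‖g j‖)
    (hgn : ∀ j, ‖g j‖ < 1) : Summable fun j => Complex.log (1 - g j) := by
  have h0 : Tendsto (fun j => ‖g j‖) atTop (nhds 0) := hg.tendsto_atTop_zero
  have hev : ∀ᶠ j in atTop, ‖Complex.log (1 - g j)‖ ≤ (3 / 2) * ‖g j‖ := by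
    filter_upwards [h0.eventually (gt_mem_nhds (by norm_num : (0:ℝ) < 1/2))] with j hj
    have : (1 : ℂ) - g j = 1 + (-(g j)) := by ring
    rw [this]
    simpa using Complex.norm_log_one_add_half_le_self (z := -(g j)) (by simpa using hj.le)
  exact Summable.of_norm_bounded_eventually_nat (hg.mul_left (3/2)) hev

/-- The infinite product of `1 - g j` is multipliable and equals the exponential of the
sum of logs. -/
lemma aux_exp_tsum_log {g : ℕ → ℂ} (hlog : Summable fun j => Complex.log (1 - g j))
    (hgn : ∀ j, ‖g j‖ < 1) :
    Multipliable (fun j => 1 - g j) ∧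
      (∏' j, (1 - g j)) = Complex.exp (∑' j, Complex.log (1 - g j)) := by
  have hfn : ∀ (_ : Unit) (j : ℕ), (fun j (_ : Unit) => 1 - g j) j () ≠ 0 :=
    fun _ j => aux_one_sub_ne (hgn j)
  have hf : ∀ (_ : Unit), Summable fun j => Complex.log ((fun j (_ : Unit) => 1 - g j) j ()) :=
    fun _ => hlog
  refine ⟨Complex.multipliable_of_summable_log hlog, ?_⟩
  have := Complex.cexp_tsum_eq_tprod (f := fun j => 1 - g j) (fun j => hfn () j) (hf ())
  exact this.symm

lemma aux_qPochInf_ne_zero {a q : ℂ} (hq : ‖q‖ < 1) (ha : ∀ j : ℕ, ‖a * q ^ j‖ < 1) :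
    qPochInf a q ≠ 0 := by
  have hn : Summable fun j : ℕ => ‖a * q ^ j‖ := by
    have h1 : Summable fun j : ℕ => ‖a‖ * ‖q‖ ^ j :=
      (summable_geometric_of_lt_one (norm_nonneg q) hq).mul_left _
    exact h1.congr fun j => by rw [norm_mul, norm_pow]
  have hlog := aux_log_summable hn ha
  obtain ⟨_, h2⟩ := aux_exp_tsum_log hlog ha
  rw [qPochInf, h2]
  exact Complex.exp_ne_zero _

lemma aux_norm_pow_lt {q : ℂ} (hq : ‖q‖ < 1) {k : ℕ} (hk : 1 ≤ k) : ‖q ^ k‖ < 1 := by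
  rw [norm_pow]
  calc ‖q‖ ^ k ≤ ‖q‖ ^ 1 := pow_le_pow_of_le_one (norm_nonneg q) hq.le hk
  _ = ‖q‖ := pow_one _
  _ < 1 := hq

set_option maxHeartbeats 1000000 in
theorem stmt_18 (q : ℂ) (hq : ‖q‖ < 1) :
    (∑' n : ℕ, qPochInf (-q ^ (2 * n + 2)) (q ^ 2) * qPochInf (q ^ (2 * n + 3)) (q ^ 2) *
        (-q ^ (2 * n + 1)) / qPochInf (-q ^ (2 * n + 2)) (q ^ 2))
    + (∑' n : ℕ, qPochInf (-q ^ (2 * (n + 1))) (q ^ 2) * qPochInf (q ^ (2 * (n + 1) + 1)) (q ^ 2) *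
        (-q ^ (2 * (n + 1))) / qPochInf (-q ^ (2 * (n + 1))) (q ^ 2))
      = (1 + q) * (qPochInf q (q ^ 2) - 1) := by
  -- the basic sequence f j = 1 - q^(2j+1) and its shifted tails P n
  set g : ℕ → ℂ := fun j => q ^ (2 * j + 1) with hg_def
  set f : ℕ → ℂ := fun j => 1 - g j with hf_def
  have hgn : ∀ j, ‖g j‖ < 1 := fun j => aux_norm_pow_lt hq (by omega)
  have hgsum : Summable fun j => ‖g j‖ := by
    have h1 : Summable fun j : ℕ => ‖q‖ * (‖q‖ ^ 2) ^ j :=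
      (summable_geometric_of_lt_one (by positivity)
        (by nlinarith [norm_nonneg q] : ‖q‖ ^ 2 < 1)).mul_left _
    refine h1.congr fun j => ?_
    rw [hg_def]
    simp only [norm_pow]
    rw [pow_add, pow_mul, pow_one]
    ring
  have hlog : Summable fun j => Complex.log (1 - g j) := aux_log_summable hgsum hgn
  set P : ℕ → ℂ := fun n => ∏' j, f (j + n) with hP_def
  -- each shifted family is multipliable and has exp-log representation
  have hshift : ∀ n : ℕ, Multipliable (fun j => f (j + n)) ∧
      P n = Complex.exp (∑' j, Complex.log (1 - g (j + n))) := by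
    intro n
    have hlog' : Summable fun j => Complex.log (1 - g (j + n)) :=
      (summable_nat_add_iff n).2 hlog
    have := aux_exp_tsum_log (g := fun j => g (j + n)) hlog' (fun j => hgn _)
    exact ⟨this.1, this.2⟩
  -- P tends to 1
  have hLtend : Tendsto (fun n => ∑' j, Complex.log (1 - g (j + n))) atTop (nhds 0) :=
    tendsto_sum_nat_add fun j => Complex.log (1 - g j)
  have hPtend : Tendsto P atTop (nhds 1) := by
    have h1 : Tendsto (fun n => Complex.exp (∑' j, Complex.log (1 - g (j + n)))) atTop
        (nhds 1) := by
      have := (Complex.continuous_exp.tendsto 0).comp hLtend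
      simpa [Function.comp_def] using this
    exact h1.congr fun n => ((hshift n).2).symm
  -- recurrence : P n = f n * P (n+1)
  have hrec : ∀ n, P n = f n * P (n + 1) := by
    intro n
    have hm : Multipliable fun j => f (j + 1 + n) := by
      have := (hshift (n + 1)).1
      refine this.congr fun j => ?_
      congr 1
      omega
    calc P n = ∏' j, f (j + n) := rfl
    _ = f (0 + n) * ∏' j, f (j + 1 + n) := tprod_eq_zero_mul' hm
    _ = f n * P (n + 1) := by
        rw [zero_add]
        congr 1
        exact tprod_congr fun j => by congr 1; omega
  -- summability of D n = q^(2n+1) * P (n+1)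
  set D : ℕ → ℂ := fun n => q ^ (2 * n + 1) * P (n + 1) with hD_def
  have hDsum : Summable D := by
    have htwo : ∀ᶠ n in atTop, ‖P (n + 1)‖ < 2 := by
      have h2 : ∀ᶠ n in atTop, ‖P n‖ < 2 := by
        have := hPtend.norm
        simp only [norm_one] at this
        exact this.eventually (gt_mem_nhds (by norm_num : (1:ℝ) < 2))
      exact (tendsto_add_atTop_nat 1).eventually h2
    refine Summable.of_norm_bounded_eventually_nat (g := fun n => 2 * (‖q‖ * (‖q‖ ^ 2) ^ n)) ?_ ?_
    · exact ((summable_geometric_of_lt_one (by positivity)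
        (by nlinarith [norm_nonneg q] : ‖q‖ ^ 2 < 1)).mul_left ‖q‖).mul_left 2
    · filter_upwards [htwo] with n hn
      have hq' : ‖q ^ (2 * n + 1)‖ = ‖q‖ * (‖q‖ ^ 2) ^ n := by
        rw [norm_pow, pow_add, pow_mul, pow_one]
        ring
      rw [hD_def]
      simp only [norm_mul]
      rw [hq']
      calc ‖q‖ * (‖q‖ ^ 2) ^ n * ‖P (n + 1)‖ ≤ ‖q‖ * (‖q‖ ^ 2) ^ n * 2 := by
            apply mul_le_mul_of_nonneg_left hn.le (by positivity)
      _ = 2 * (‖q‖ * (‖q‖ ^ 2) ^ n) := by ring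
  -- D n = P (n+1) - P n
  have hDeq : ∀ n, D n = P (n + 1) - P n := by
    intro n
    rw [hD_def, hrec n, hf_def, hg_def]
    ring
  -- HasSum D (1 - P 0)
  have hHasD : HasSum D (1 - P 0) := by
    rw [hDsum.hasSum_iff_tendsto_nat]
    have hps : ∀ n, ∑ i ∈ Finset.range n, D i = P n - P 0 := by
      intro n
      rw [Finset.sum_congr rfl fun i _ => hDeq i]
      exact Finset.sum_range_sub P n
    rw [show (fun n => ∑ i ∈ Finset.range n, D i) = fun n => P n - P 0 from funext hps]
    exact hPtend.sub_const (P 0)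
  -- nonvanishing of the Pochhammer denominators
  have hQ : ‖q ^ 2‖ < 1 := by
    rw [norm_pow]; nlinarith [norm_nonneg q]
  have hden : ∀ m : ℕ, 1 ≤ m → qPochInf (-q ^ m) (q ^ 2) ≠ 0 := by
    intro m hm
    apply aux_qPochInf_ne_zero hQ
    intro j
    have : -q ^ m * (q ^ 2) ^ j = -q ^ (m + 2 * j) := by
      rw [← pow_mul, pow_add]; ring
    rw [this, norm_neg]
    exact aux_norm_pow_lt hq (by omega)
  -- identify the positive Pochhammer values with P
  have hpos : ∀ (m n : ℕ), m = 2 * n + 1 → qPochInf (q ^ m) (q ^ 2) = P n := by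
    intro m n hmn
    rw [qPochInf, hP_def]
    refine tprod_congr fun j => ?_
    rw [hf_def, hg_def]
    congr 1
    rw [← pow_mul, ← pow_add]
    congr 1
    omega
  -- simplify the two summands
  have hs1 : ∀ n : ℕ, qPochInf (-q ^ (2 * n + 2)) (q ^ 2) * qPochInf (q ^ (2 * n + 3)) (q ^ 2) *
      (-q ^ (2 * n + 1)) / qPochInf (-q ^ (2 * n + 2)) (q ^ 2) = -D n := by
    intro n
    have hA := hden (2 * n + 2) (by omega)
    rw [mul_assoc, mul_div_cancel_left₀ _ hA, hpos (2 * n + 3) (n + 1) (by omega), hD_def]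
    ring
  have hs2 : ∀ n : ℕ, qPochInf (-q ^ (2 * (n + 1))) (q ^ 2) *
      qPochInf (q ^ (2 * (n + 1) + 1)) (q ^ 2) *
      (-q ^ (2 * (n + 1))) / qPochInf (-q ^ (2 * (n + 1))) (q ^ 2) = -q * D n := by
    intro n
    have hA := hden (2 * (n + 1)) (by omega)
    rw [mul_assoc, mul_div_cancel_left₀ _ hA, hpos (2 * (n + 1) + 1) (n + 1) (by omega), hD_def]
    ring
  have hS1 : HasSum (fun n : ℕ => qPochInf (-q ^ (2 * n + 2)) (q ^ 2) *
      qPochInf (q ^ (2 * n + 3)) (q ^ 2) *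
      (-q ^ (2 * n + 1)) / qPochInf (-q ^ (2 * n + 2)) (q ^ 2)) (-(1 - P 0)) := by
    have h := hHasD.neg
    rwa [show (fun n => -D n) = (fun n : ℕ => qPochInf (-q ^ (2 * n + 2)) (q ^ 2) *
      qPochInf (q ^ (2 * n + 3)) (q ^ 2) *
      (-q ^ (2 * n + 1)) / qPochInf (-q ^ (2 * n + 2)) (q ^ 2)) from
        funext fun n => (hs1 n).symm] at h
  have hS2 : HasSum (fun n : ℕ => qPochInf (-q ^ (2 * (n + 1))) (q ^ 2) *
      qPochInf (q ^ (2 * (n + 1) + 1)) (q ^ 2) *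
      (-q ^ (2 * (n + 1))) / qPochInf (-q ^ (2 * (n + 1))) (q ^ 2)) (-q * (1 - P 0)) := by
    have h := hHasD.mul_left (-q)
    rwa [show (fun n => -q * D n) = (fun n : ℕ => qPochInf (-q ^ (2 * (n + 1))) (q ^ 2) *
      qPochInf (q ^ (2 * (n + 1) + 1)) (q ^ 2) *
      (-q ^ (2 * (n + 1))) / qPochInf (-q ^ (2 * (n + 1))) (q ^ 2)) from
        funext fun n => (hs2 n).symm] at h
  have hP0 : qPochInf q (q ^ 2) = P 0 := by
    have h := hpos 1 0 (by omega)
    rwa [pow_one] at h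
  rw [hS1.tsum_eq, hS2.tsum_eq, hP0]
  ring
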